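/- cov*(𝒵₀) ≤ 𝔡, where 𝒵₀ is the ideal of subsets of ω of asymptotic density 0. That is, there exists a family F ⊆ 𝒵₀ of cardinality at most 𝔡 such that every infinite subset of ω has infinite intersection with some member of F. -/

import Mathlib

open Cardinal Filter

/-- `A ⊆ ω` has asymptotic density 0. -/
def densityZero (A : Set ℕ) : Prop :=
  Tendsto (fun n : ℕ => (Nat.card ↥(A ∩ Set.Iio n) : ℝ) / n) atTop (nhds 0)

/-- The dominating number `𝔡`. -/
noncomputable def dominatingNumber : Cardinal :=
  sInf {c | ∃ F : Set (ℕ → ℕ), #↥F = c ∧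
    ∀ g : ℕ → ℕ, ∃ f ∈ F, ∀ᶠ n in atTop, g n ≤ f n}

/-! Auxiliary constructions -/

/-- Band boundaries: band `i` occupies levels `[Jf i, Jf (i+1))`, with address
bits `[Jf i, Jf i + (i+1))` and trigger levels `[Jf i + (i+1), Jf (i+1))`. -/
def Jf : ℕ → ℕ
  | 0 => 0
  | i+1 => Jf i + (i+1) + 2^(i+1)

/-- The trigger condition for level `k` on the low bits of `n`. -/
def condK (k n : ℕ) : Prop :=
  ∃ i, Jf i + (i+1) ≤ k ∧ k < Jf (i+1) ∧ (n / 2^(Jf i)) % 2^(i+1) = k - (Jf i + (i+1))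

/-- Window boundaries driven by `f`. -/
def Nf (f : ℕ → ℕ) : ℕ → ℕ
  | 0 => 1
  | k+1 => f (Nf f k) + 2 * Nf f k + 4^(k+1) + 1

/-- The density-zero trap set attached to `f`. -/
def Bf (f : ℕ → ℕ) : Set ℕ :=
  {n | ∃ k, Nf f k ≤ n ∧ n < Nf f (k+1) ∧ condK k n}

lemma Jf_mono : Monotone Jf :=
  monotone_nat_of_le_succ fun i => by
    have : 0 < 2^(i+1) := Nat.pow_pos (by norm_num)
    show Jf i ≤ Jf i + (i+1) + 2^(i+1); omega

lemma Jf_ge (i : ℕ) : i ≤ Jf i := by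
  induction i with
  | zero => simp [Jf]
  | succ n ih =>
    have : 0 < 2^(n+1) := Nat.pow_pos (by norm_num)
    show n + 1 ≤ Jf n + (n+1) + 2^(n+1); omega

lemma band_unique {i i' k : ℕ} (h1 : Jf i + (i+1) ≤ k) (h2 : k < Jf (i+1))
    (h1' : Jf i' + (i'+1) ≤ k) (h2' : k < Jf (i'+1)) : i' = i := by
  rcases lt_trichotomy i i' with h | h | h
  · have : Jf (i+1) ≤ Jf i' := Jf_mono h
    omega
  · exact h.symm
  · have : Jf (i'+1) ≤ Jf i := Jf_mono h
    omega

lemma Nf_pos (f : ℕ → ℕ) (k : ℕ) : 0 < Nf f k := by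
  cases k with
  | zero => simp [Nf]
  | succ n => exact Nat.succ_pos _

lemma Nf_lt_succ (f : ℕ → ℕ) (k : ℕ) : Nf f k < Nf f (k+1) := by
  have := Nf_pos f k
  have : 0 < 4^(k+1) := Nat.pow_pos (by norm_num)
  show Nf f k < f (Nf f k) + 2 * Nf f k + 4^(k+1) + 1
  have := Nf_pos f k
  omega

lemma Nf_strictMono (f : ℕ → ℕ) : StrictMono (Nf f) :=
  strictMono_nat_of_lt_succ (Nf_lt_succ f)

lemma Nf_gt (f : ℕ → ℕ) (k : ℕ) : k < Nf f k := by
  induction k with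
  | zero => simp [Nf]
  | succ n ih =>
    have := Nf_lt_succ f n
    omega

lemma Nf_ge_pow4 (f : ℕ → ℕ) (k : ℕ) : 4^k ≤ Nf f k := by
  cases k with
  | zero => simp [Nf]
  | succ n =>
    show 4^(n+1) ≤ f (Nf f n) + 2 * Nf f n + 4^(n+1) + 1
    omega

/-- `(x+y)/c ≤ x/c + y/c + 1`. -/
lemma add_div_le₃ (x y c : ℕ) : (x + y) / c ≤ x / c + y / c + 1 := by
  rcases Nat.eq_zero_or_pos c with hc | hc
  · simp [hc]
  · have hx : x < c * (x / c) + c := by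
      have := Nat.mod_lt x hc
      have := Nat.div_add_mod x c
      omega
    have hy : y < c * (y / c) + c := by
      have := Nat.mod_lt y hc
      have := Nat.div_add_mod y c
      omega
    have : x + y < (x / c + y / c + 2) * c := by ring_nf; ring_nf at hx hy ⊢; omega
    have := (Nat.div_lt_iff_lt_mul hc).mpr this
    omega

/-- `a/c + b/c ≤ (a+b)/c`. -/
lemma div_add_div_le (a b c : ℕ) : a / c + b / c ≤ (a + b) / c := by
  rcases Nat.eq_zero_or_pos c with hc | hc
  · simp [hc]
  · rw [Nat.le_div_iff_mul_le hc, add_mul]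
    exact Nat.add_le_add (Nat.div_mul_le_self a c) (Nat.div_mul_le_self b c)

lemma sum_div_le (s : Finset ℕ) (g : ℕ → ℕ) (c : ℕ) :
    (∑ k ∈ s, g k / c) ≤ (∑ k ∈ s, g k) / c := by
  classical
  induction s using Finset.induction with
  | empty => simp
  | insert x s hx ih =>
    rw [Finset.sum_insert hx, Finset.sum_insert hx]
    exact le_trans (Nat.add_le_add_left ih _) (div_add_div_le _ _ _)

section
open Finset

/-- Counting integers in `[s,t)` with prescribed bits `[J, J+b)`. -/
lemma count_pattern (s t J b v : ℕ) :
    ((Finset.Ico s t).filter (fun n => (n / 2^J) % 2^b = v)).card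
      ≤ (t - s) / 2^b + 2^(J+1) := by
  classical
  rcases le_or_gt t s with hts | hst
  · have : Finset.Ico s t = ∅ := Finset.Ico_eq_empty (by omega)
    simp [this]
  set P : ℕ := 2^J * 2^b with hP
  have hJpos : 0 < 2^J := Nat.pow_pos (by norm_num)
  have hbpos : 0 < 2^b := Nat.pow_pos (by norm_num)
  have hPpos : 0 < P := Nat.mul_pos hJpos hbpos
  have key : ∀ n, (n / 2^J) % 2^b = v → n = P * (n / P) + 2^J * v + n % 2^J := by
    intro n hn
    have h1 : 2^b * ((n / 2^J) / 2^b) + (n / 2^J) % 2^b = n / 2^J := Nat.div_add_mod _ _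
    rw [hn, Nat.div_div_eq_div_mul, ← hP] at h1
    have h2 : 2^J * (n / 2^J) + n % 2^J = n := Nat.div_add_mod _ _
    calc n = 2^J * (n / 2^J) + n % 2^J := h2.symm
    _ = 2^J * (2^b * (n / P) + v) + n % 2^J := by rw [h1]
    _ = P * (n / P) + 2^J * v + n % 2^J := by rw [hP]; ring
  have hcard : ((Finset.Ico s t).filter (fun n => (n / 2^J) % 2^b = v)).card
      ≤ ((Finset.Icc (s / P) (t / P)) ×ˢ (Finset.range (2^J))).card := by
    apply Finset.card_le_card_of_injOn (fun n => (n / P, n % 2^J))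
    · intro n hn
      simp only [Finset.mem_coe, Finset.mem_filter, Finset.mem_Ico] at hn
      simp only [Finset.mem_coe, Finset.mem_product, Finset.mem_Icc, Finset.mem_range]
      exact ⟨⟨Nat.div_le_div_right hn.1.1, Nat.div_le_div_right (le_of_lt hn.1.2)⟩,
        Nat.mod_lt _ hJpos⟩
    · intro n₁ hn₁ n₂ hn₂ hpair
      simp only [Finset.coe_filter, Set.mem_setOf_eq, Finset.mem_Ico] at hn₁ hn₂
      have e1 := key n₁ hn₁.2
      have e2 := key n₂ hn₂.2
      simp only [Prod.mk.injEq] at hpair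
      rw [e1, e2, hpair.1, hpair.2]
  have hprod : ((Finset.Icc (s / P) (t / P)) ×ˢ (Finset.range (2^J))).card
      = (t / P + 1 - s / P) * 2^J := by
    rw [Finset.card_product, Nat.card_Icc, Finset.card_range]
  have hsle : s / P ≤ t / P := Nat.div_le_div_right (le_of_lt hst)
  have h2 : t / P ≤ s / P + (t - s) / P + 1 := by
    have h1 : t = s + (t - s) := by omega
    calc t / P = (s + (t - s)) / P := by rw [← h1]
    _ ≤ s / P + (t - s) / P + 1 := add_div_le₃ _ _ _
  have hD : t / P + 1 - s / P ≤ (t - s) / P + 2 := by omega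
  have hfin : (t - s) / P * 2^J ≤ (t - s) / 2^b := by
    have : (t - s) / P = ((t - s) / 2^b) / 2^J := by
      rw [Nat.div_div_eq_div_mul, hP, Nat.mul_comm]
    rw [this]
    exact Nat.div_mul_le_self _ _
  calc ((Finset.Ico s t).filter (fun n => (n / 2^J) % 2^b = v)).card
      ≤ (t / P + 1 - s / P) * 2^J := by rw [← hprod]; exact hcard
  _ ≤ ((t - s) / P + 2) * 2^J := Nat.mul_le_mul_right _ hD
  _ = (t - s) / P * 2^J + 2 * 2^J := by ring
  _ ≤ (t - s) / 2^b + 2^(J+1) := by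
      have : 2 * 2^J = 2^(J+1) := by rw [pow_succ]; ring
      rw [this]
      exact Nat.add_le_add_right hfin _

end

section
open Finset
open scoped Classical

/-- Per-window cardinality bound. -/
lemma Wcard_le (f : ℕ → ℕ) (i₀ k X : ℕ) (hk : Jf i₀ ≤ k) :
    ((Finset.Ico (Nf f k) (min (Nf f (k+1)) X)).filter (condK k)).card
      ≤ (min (Nf f (k+1)) X - Nf f k) / 2^(i₀+1) + 2^(k+1) := by
  classical
  by_cases hband : ∃ i, Jf i + (i+1) ≤ k ∧ k < Jf (i+1)
  · obtain ⟨i, hi1, hi2⟩ := hband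
    have hii₀ : i₀ ≤ i := by
      by_contra hcon
      push_neg at hcon
      have : Jf (i+1) ≤ Jf i₀ := Jf_mono hcon
      omega
    have hcond : ∀ n, condK k n ↔ (n / 2^(Jf i)) % 2^(i+1) = k - (Jf i + (i+1)) := by
      intro n
      constructor
      · rintro ⟨i', h1', h2', h3'⟩
        rwa [band_unique hi1 hi2 h1' h2'] at h3'
      · intro h
        exact ⟨i, hi1, hi2, h⟩
    have heq : (Finset.Ico (Nf f k) (min (Nf f (k+1)) X)).filter (condK k)
        = (Finset.Ico (Nf f k) (min (Nf f (k+1)) X)).filter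
            (fun n => (n / 2^(Jf i)) % 2^(i+1) = k - (Jf i + (i+1))) := by
      apply Finset.filter_congr
      intro n _
      simp only [hcond]
    rw [heq]
    have h1 := count_pattern (Nf f k) (min (Nf f (k+1)) X) (Jf i) (i+1) (k - (Jf i + (i+1)))
    refine le_trans h1 (Nat.add_le_add ?_ ?_)
    · apply Nat.div_le_div_left _ (Nat.pow_pos (by norm_num))
      exact Nat.pow_le_pow_right (by norm_num) (by omega)
    · exact Nat.pow_le_pow_right (by norm_num) (by omega)
  · have : ∀ n ∈ Finset.Ico (Nf f k) (min (Nf f (k+1)) X), ¬ condK k n := by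
      rintro n - ⟨i, h1, h2, h3⟩
      exact hband ⟨i, h1, h2⟩
    rw [Finset.filter_false_of_mem this]
    simp

end

section
open Finset

/-- Geometric-type bound. -/
lemma mygeom_le (n : ℕ) : (∑ k ∈ Finset.range n, 2^(k+1)) ≤ 2^(n+1) := by
  induction n with
  | zero => simp
  | succ m ih =>
    rw [Finset.sum_range_succ]
    have : 2^(m+1) + 2^(m+1) = 2^(m+2) := by ring
    omega

/-- Master counting estimate. -/
lemma master (f : ℕ → ℕ) (i₀ X : ℕ) (hX1 : 1 ≤ X) (hX2 : Jf i₀ ≤ X) :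
    Nat.card ↥(Bf f ∩ Set.Iio X) ≤ Nf f (Jf i₀) + X / 2^(i₀+1) + 4 * Nat.sqrt X := by
  classical
  set k₁ := Jf i₀ with hk₁
  set W : ℕ → Finset ℕ :=
    fun k => (Finset.Ico (Nf f k) (min (Nf f (k+1)) X)).filter (condK k) with hW
  -- Step 0: inclusion into the union of windows
  have hsub : Bf f ∩ Set.Iio X ⊆ ↑((Finset.range X).biUnion W) := by
    rintro n ⟨⟨k, h1, h2, h3⟩, (hn : n < X)⟩
    have hkX : k < X := lt_of_lt_of_le (Nf_gt f k) (le_trans h1 (le_of_lt hn))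
    simp only [Finset.coe_biUnion, Finset.mem_coe, Finset.mem_range, Set.mem_iUnion]
    exact ⟨k, hkX, by
      simp only [hW, Finset.mem_filter, Finset.mem_Ico]
      exact ⟨⟨h1, lt_min h2 hn⟩, h3⟩⟩
  have hstep0 : Nat.card ↥(Bf f ∩ Set.Iio X) ≤ ∑ k ∈ Finset.range X, (W k).card := by
    calc Nat.card ↥(Bf f ∩ Set.Iio X) = (Bf f ∩ Set.Iio X).ncard :=
          Nat.card_coe_set_eq _
    _ ≤ (↑((Finset.range X).biUnion W) : Set ℕ).ncard :=
          Set.ncard_le_ncard hsub (Finset.finite_toSet _)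
    _ = ((Finset.range X).biUnion W).card := Set.ncard_coe_finset _
    _ ≤ ∑ k ∈ Finset.range X, (W k).card := Finset.card_biUnion_le
  -- split the sum
  have hsplit : (∑ k ∈ Finset.range k₁, (W k).card) + ∑ k ∈ Finset.Ico k₁ X, (W k).card
      = ∑ k ∈ Finset.range X, (W k).card := Finset.sum_range_add_sum_Ico _ hX2
  -- Step 2: initial part
  have hstep2 : (∑ k ∈ Finset.range k₁, (W k).card) ≤ Nf f k₁ := by
    have hle : ∀ k, (W k).card ≤ Nf f (k+1) - Nf f k := by
      intro k
      calc (W k).card ≤ (Finset.Ico (Nf f k) (min (Nf f (k+1)) X)).card :=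
            Finset.card_filter_le _ _
      _ ≤ (Finset.Ico (Nf f k) (Nf f (k+1))).card :=
            Finset.card_le_card (Finset.Ico_subset_Ico le_rfl (min_le_left _ _))
      _ = Nf f (k+1) - Nf f k := Nat.card_Ico _ _
    calc (∑ k ∈ Finset.range k₁, (W k).card)
        ≤ ∑ k ∈ Finset.range k₁, (Nf f (k+1) - Nf f k) := Finset.sum_le_sum fun k _ => hle k
    _ = Nf f k₁ - Nf f 0 := Finset.sum_range_tsub (Nf_strictMono f).monotone _
    _ ≤ Nf f k₁ := Nat.sub_le _ _
  -- Step 3-5: tail part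
  set L : ℕ → ℕ := fun k => min (Nf f (k+1)) X - Nf f k with hL
  set E : ℕ → ℕ := fun k => if Nf f k < X then 2^(k+1) else 0 with hE
  have hstep3 : ∀ k ∈ Finset.Ico k₁ X, (W k).card ≤ L k / 2^(i₀+1) + E k := by
    intro k hk
    simp only [Finset.mem_Ico] at hk
    by_cases hNX : Nf f k < X
    · have := Wcard_le f i₀ k X hk.1
      simp only [hE, if_pos hNX]
      exact this
    · have : min (Nf f (k+1)) X ≤ Nf f k := le_trans (min_le_right _ _) (not_lt.mp hNX)
      have hempty : Finset.Ico (Nf f k) (min (Nf f (k+1)) X) = ∅ := Finset.Ico_eq_empty (by omega)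
      simp only [hW, hempty, Finset.filter_empty, Finset.card_empty]
      exact Nat.zero_le _
  have hsumL : (∑ k ∈ Finset.Ico k₁ X, L k) ≤ X := by
    set m : ℕ → ℕ := fun k => min (Nf f k) X with hm
    have hmono : Monotone m := fun a b hab => le_min (le_trans (min_le_left _ _)
      ((Nf_strictMono f).monotone hab)) (min_le_right _ _)
    have hLk : ∀ k, L k ≤ m (k+1) - m k := by
      intro k
      by_cases hNX : Nf f k < X
      · have : m k = Nf f k := min_eq_left (le_of_lt hNX)
        simp only [hL, hm] at *
        omega
      · have h1 : min (Nf f (k+1)) X ≤ Nf f k := le_trans (min_le_right _ _) (not_lt.mp hNX)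
        simp only [hL]
        omega
    calc (∑ k ∈ Finset.Ico k₁ X, L k) ≤ ∑ k ∈ Finset.range X, L k :=
          Finset.sum_le_sum_of_subset (by
            intro k hk
            simp only [Finset.mem_Ico] at hk
            simp only [Finset.mem_range]
            exact hk.2)
    _ ≤ ∑ k ∈ Finset.range X, (m (k+1) - m k) := Finset.sum_le_sum fun k _ => hLk k
    _ = m X - m 0 := Finset.sum_range_tsub hmono _
    _ ≤ X := le_trans (Nat.sub_le _ _) (min_le_right _ _)
  have hsumdiv : (∑ k ∈ Finset.Ico k₁ X, L k / 2^(i₀+1)) ≤ X / 2^(i₀+1) := by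
    calc (∑ k ∈ Finset.Ico k₁ X, L k / 2^(i₀+1)) ≤ (∑ k ∈ Finset.Ico k₁ X, L k) / 2^(i₀+1) :=
          sum_div_le _ _ _
    _ ≤ X / 2^(i₀+1) := Nat.div_le_div_right hsumL
  have hsumE : (∑ k ∈ Finset.Ico k₁ X, E k) ≤ 4 * Nat.sqrt X := by
    set M := Nat.log 2 (Nat.sqrt X) with hM
    have hsq : 0 < Nat.sqrt X := Nat.sqrt_pos.mpr (by omega)
    have hmem : ∀ k, Nf f k < X → k ≤ M := by
      intro k hk
      have h4 : 4^k ≤ X := le_trans (Nf_ge_pow4 f k) (le_of_lt hk)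
      have h2 : 2^k * 2^k ≤ X := by
        have : (2 : ℕ)^k * 2^k = 4^k := by
          rw [← pow_add]
          have : (4 : ℕ) = 2^2 := by norm_num
          rw [this, ← pow_mul]
          ring_nf
        omega
      have hks : 2^k ≤ Nat.sqrt X := Nat.le_sqrt.mpr h2
      exact Nat.le_log_of_pow_le (by norm_num) hks
    calc (∑ k ∈ Finset.Ico k₁ X, E k) ≤ ∑ k ∈ Finset.range X, E k :=
          Finset.sum_le_sum_of_subset (by
            intro k hk
            simp only [Finset.mem_Ico] at hk
            simp only [Finset.mem_range]
            exact hk.2)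
    _ = ∑ k ∈ (Finset.range X).filter (fun k => Nf f k < X), 2^(k+1) := by
          rw [Finset.sum_filter]
    _ ≤ ∑ k ∈ Finset.range (M+1), 2^(k+1) := by
          apply Finset.sum_le_sum_of_subset
          intro k hk
          simp only [Finset.mem_filter, Finset.mem_range] at hk
          simp only [Finset.mem_range]
          exact Nat.lt_succ_of_le (hmem k hk.2)
    _ ≤ 2^(M+2) := mygeom_le _
    _ = 4 * 2^M := by ring
    _ ≤ 4 * Nat.sqrt X := by
          have h := Nat.pow_log_le_self 2 (show Nat.sqrt X ≠ 0 by omega)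
          rw [← hM] at h
          omega
  -- assemble
  have htail : (∑ k ∈ Finset.Ico k₁ X, (W k).card) ≤ X / 2^(i₀+1) + 4 * Nat.sqrt X := by
    calc (∑ k ∈ Finset.Ico k₁ X, (W k).card)
        ≤ ∑ k ∈ Finset.Ico k₁ X, (L k / 2^(i₀+1) + E k) := Finset.sum_le_sum hstep3
    _ = (∑ k ∈ Finset.Ico k₁ X, L k / 2^(i₀+1)) + ∑ k ∈ Finset.Ico k₁ X, E k :=
          Finset.sum_add_distrib
    _ ≤ X / 2^(i₀+1) + 4 * Nat.sqrt X := Nat.add_le_add hsumdiv hsumE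
  have hfinal : Nat.card ↥(Bf f ∩ Set.Iio X)
      ≤ Nf f k₁ + (X / 2^(i₀+1) + 4 * Nat.sqrt X) := by
    calc Nat.card ↥(Bf f ∩ Set.Iio X) ≤ ∑ k ∈ Finset.range X, (W k).card := hstep0
    _ = (∑ k ∈ Finset.range k₁, (W k).card) + ∑ k ∈ Finset.Ico k₁ X, (W k).card := hsplit.symm
    _ ≤ Nf f k₁ + (X / 2^(i₀+1) + 4 * Nat.sqrt X) := Nat.add_le_add hstep2 htail
  omega

end

section

lemma sqrt_tendsto : Tendsto (fun X : ℕ => ((Nat.sqrt X : ℝ))) atTop atTop := by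
  apply tendsto_natCast_atTop_atTop.comp
  apply tendsto_atTop_atTop_of_monotone (fun a b hab => Nat.sqrt_le_sqrt hab)
  intro b
  refine ⟨b * b, ?_⟩
  have : Nat.sqrt (b * b) = b := by
    have := Nat.sqrt_eq' b
    rwa [pow_two] at this
  omega

lemma hT3 : Tendsto (fun X : ℕ => (4 * Nat.sqrt X : ℝ) / X) atTop (nhds 0) := by
  apply squeeze_zero' (g := fun X : ℕ => 4 / (Nat.sqrt X : ℝ))
  · filter_upwards [eventually_ge_atTop 1] with X hX
    positivity
  · filter_upwards [eventually_ge_atTop 1] with X hX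
    have hs : 0 < Nat.sqrt X := Nat.sqrt_pos.mpr (by omega)
    have hXpos : (0:ℝ) < X := by exact_mod_cast hX
    have hspos : (0:ℝ) < (Nat.sqrt X : ℝ) := by exact_mod_cast hs
    rw [div_le_div_iff₀ hXpos hspos]
    have h1 : (Nat.sqrt X : ℝ) * (Nat.sqrt X : ℝ) ≤ X := by
      exact_mod_cast Nat.sqrt_le X
    nlinarith
  · exact Tendsto.div_atTop tendsto_const_nhds sqrt_tendsto

theorem densityZero_Bf (f : ℕ → ℕ) : densityZero (Bf f) := by
  rw [densityZero]
  rw [Metric.tendsto_atTop]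
  intro ε hε
  obtain ⟨i₀, hi₀⟩ : ∃ i₀ : ℕ, (1:ℝ) / 2^(i₀+1) < ε/3 := by
    obtain ⟨n, hn⟩ := exists_pow_lt_of_lt_one (show (0:ℝ) < ε/3 by positivity)
      (show (1:ℝ)/2 < 1 by norm_num)
    refine ⟨n, lt_of_le_of_lt ?_ hn⟩
    rw [div_pow, one_pow]
    apply div_le_div_of_nonneg_left (by norm_num) (by positivity)
    calc (2:ℝ)^n ≤ 2^(n+1) := by
          apply pow_le_pow_right₀ (by norm_num) (by omega)
    _ = 2^(n+1) := rfl
  have hT1 : Tendsto (fun X : ℕ => (Nf f (Jf i₀) : ℝ) / X) atTop (nhds 0) :=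
    tendsto_const_div_atTop_nhds_zero_nat _
  have hev1 : ∀ᶠ X : ℕ in atTop, (Nf f (Jf i₀) : ℝ) / X < ε/3 :=
    hT1.eventually_lt_const (by positivity)
  have hev3 : ∀ᶠ X : ℕ in atTop, (4 * Nat.sqrt X : ℝ) / X < ε/3 :=
    hT3.eventually_lt_const (by positivity)
  have hevfinal : ∀ᶠ X : ℕ in atTop,
      dist ((Nat.card ↥(Bf f ∩ Set.Iio X) : ℝ) / X) 0 < ε := by
    filter_upwards [hev1, hev3, eventually_ge_atTop 1, eventually_ge_atTop (Jf i₀)]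
      with X h1 h3 hX1 hX2
    have hm := master f i₀ X hX1 hX2
    have hXpos : (0:ℝ) < X := by exact_mod_cast hX1
    have hcast : (Nat.card ↥(Bf f ∩ Set.Iio X) : ℝ)
        ≤ (Nf f (Jf i₀) : ℝ) + ((X / 2^(i₀+1) : ℕ) : ℝ) + (4 * Nat.sqrt X : ℝ) := by
      exact_mod_cast hm
    have hdiv2 : ((X / 2^(i₀+1) : ℕ) : ℝ) ≤ (X : ℝ) / 2^(i₀+1) := by
      have := Nat.cast_div_le (α := ℝ) (m := X) (n := 2^(i₀+1))
      simpa using this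
    have hq : (Nat.card ↥(Bf f ∩ Set.Iio X) : ℝ) / X
        ≤ (Nf f (Jf i₀) : ℝ)/X + 1/2^(i₀+1) + (4 * Nat.sqrt X : ℝ)/X := by
      have h5 : (Nat.card ↥(Bf f ∩ Set.Iio X) : ℝ) / X
          ≤ ((Nf f (Jf i₀) : ℝ) + (X : ℝ)/2^(i₀+1) + (4 * Nat.sqrt X : ℝ)) / X := by
        apply div_le_div_of_nonneg_right ?_ (le_of_lt hXpos)
        · linarith
      refine le_trans h5 ?_
      rw [add_div, add_div]
      have : ((X:ℝ)/2^(i₀+1))/X = 1/2^(i₀+1) := by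
        field_simp
      rw [this]
    have hnonneg : (0:ℝ) ≤ (Nat.card ↥(Bf f ∩ Set.Iio X) : ℝ) / X := by positivity
    rw [Real.dist_eq, sub_zero, abs_of_nonneg hnonneg]
    calc (Nat.card ↥(Bf f ∩ Set.Iio X) : ℝ) / X
        ≤ (Nf f (Jf i₀) : ℝ)/X + 1/2^(i₀+1) + (4 * Nat.sqrt X : ℝ)/X := hq
    _ < ε/3 + ε/3 + ε/3 := by
        apply add_lt_add (add_lt_add h1 hi₀) h3
    _ = ε := by ring
  exact eventually_atTop.mp hevfinal

end

section
open scoped Classical in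
/-- A coherent branch of residues along which `A` is infinite. -/
noncomputable def xres (A : Set ℕ) : ℕ → ℕ
  | 0 => 0
  | m+1 => if ({a ∈ A | a % 2^(m+1) = xres A m}).Infinite then xres A m else xres A m + 2^m

lemma xres_lt (A : Set ℕ) (m : ℕ) : xres A m < 2^m := by
  induction m with
  | zero => simp [xres]
  | succ n ih =>
    rw [xres]
    split
    · calc xres A n < 2^n := ih
      _ ≤ 2^(n+1) := Nat.pow_le_pow_right (by norm_num) (by omega)
    · have : (2:ℕ)^(n+1) = 2^n + 2^n := by ring
      omega

lemma xres_succ_mod (A : Set ℕ) (m : ℕ) : xres A (m+1) % 2^m = xres A m := by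
  have hlt := xres_lt A m
  rw [xres]
  split
  · exact Nat.mod_eq_of_lt hlt
  · rw [Nat.add_mod_right]
    exact Nat.mod_eq_of_lt hlt

lemma xres_mod (A : Set ℕ) {m' m : ℕ} (h : m' ≤ m) : xres A m % 2^m' = xres A m' := by
  induction m with
  | zero =>
    have : m' = 0 := by omega
    subst this
    simp [xres]
  | succ n ih =>
    rcases Nat.lt_or_ge m' (n+1) with hlt | hge
    · have h1 : m' ≤ n := by omega
      have h2 : (2:ℕ)^m' ∣ 2^n := pow_dvd_pow 2 h1
      calc xres A (n+1) % 2^m' = (xres A (n+1) % 2^n) % 2^m' := (Nat.mod_mod_of_dvd _ h2).symm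
      _ = xres A n % 2^m' := by rw [xres_succ_mod]
      _ = xres A m' := ih h1
    · have : m' = n+1 := by omega
      subst this
      exact Nat.mod_eq_of_lt (xres_lt A _)

lemma xres_inf (A : Set ℕ) (hA : A.Infinite) (m : ℕ) :
    ({a ∈ A | a % 2^m = xres A m}).Infinite := by
  induction m with
  | zero =>
    have : {a ∈ A | a % 2^0 = xres A 0} = A := by
      ext a; simp [xres, Nat.mod_one]
    rwa [this]
  | succ n ih =>
    by_cases hif : ({a ∈ A | a % 2^(n+1) = xres A n}).Infinite
    · have : xres A (n+1) = xres A n := by rw [xres, if_pos hif]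
      rwa [this]
    · have hval : xres A (n+1) = xres A n + 2^n := by rw [xres, if_neg hif]
      rw [hval]
      have hsub : {a ∈ A | a % 2^n = xres A n} \ {a ∈ A | a % 2^(n+1) = xres A n}
          ⊆ {a ∈ A | a % 2^(n+1) = xres A n + 2^n} := by
        rintro a ⟨⟨haA, ham⟩, hnot⟩
        refine ⟨haA, ?_⟩
        have hnot' : ¬ (a % 2^(n+1) = xres A n) := fun h => hnot ⟨haA, h⟩
        have h2 : (2:ℕ)^(n+1) = 2^n + 2^n := by ring
        have hpos : 0 < (2:ℕ)^n := Nat.pow_pos (by norm_num)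
        have hrlt : a % 2^(n+1) < 2^(n+1) := Nat.mod_lt _ (by omega)
        have hrn : (a % 2^(n+1)) % 2^n = xres A n := by
          rw [Nat.mod_mod_of_dvd _ (pow_dvd_pow 2 (Nat.le_succ n))]
          exact ham
        have hrec : 2^n * ((a % 2^(n+1)) / 2^n) + (a % 2^(n+1)) % 2^n = a % 2^(n+1) :=
          Nat.div_add_mod _ _
        have hqlt : (a % 2^(n+1)) / 2^n < 2 := by
          rw [Nat.div_lt_iff_lt_mul hpos]
          calc a % 2^(n+1) < 2^(n+1) := hrlt
          _ = 2 * 2^n := by ring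
        have hq01 : (a % 2^(n+1)) / 2^n = 0 ∨ (a % 2^(n+1)) / 2^n = 1 :=
          Nat.le_one_iff_eq_zero_or_eq_one.mp (by omega)
        rcases hq01 with h0 | h1
        · rw [h0] at hrec
          exact absurd (by omega : a % 2^(n+1) = xres A n) hnot'
        · rw [h1] at hrec
          omega
      have hdiffinf : ({a ∈ A | a % 2^n = xres A n} \
          {a ∈ A | a % 2^(n+1) = xres A n}).Infinite :=
        Set.Infinite.diff ih (Set.not_infinite.mp hif)
      exact hdiffinf.mono hsub

/-- A fast function associated to an infinite set. -/
noncomputable def hfun (A : Set ℕ) (n : ℕ) : ℕ :=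
  sInf {a | a ∈ A ∧ n < a ∧ a % 2^n = xres A n}

lemma hfun_spec (A : Set ℕ) (hA : A.Infinite) (n : ℕ) :
    hfun A n ∈ A ∧ n < hfun A n ∧ hfun A n % 2^n = xres A n := by
  have hinf := xres_inf A hA n
  have hne : {a | a ∈ A ∧ n < a ∧ a % 2^n = xres A n}.Nonempty := by
    by_contra hcon
    rw [Set.not_nonempty_iff_eq_empty] at hcon
    apply hinf
    apply Set.Finite.subset (Set.finite_Iic n)
    intro a ha
    simp only [Set.mem_setOf_eq] at ha
    by_contra hgt
    simp only [Set.mem_Iic, not_le] at hgt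
    have : a ∈ {a | a ∈ A ∧ n < a ∧ a % 2^n = xres A n} := ⟨ha.1, hgt, ha.2⟩
    rw [hcon] at this
    exact this
  exact Nat.sInf_mem hne

/-- Bit extraction. -/
lemma bits_extract (a x J b : ℕ) (h : a % 2^(J+b) = x) :
    (a / 2^J) % 2^b = x / 2^J := by
  have hJ : 0 < (2:ℕ)^J := Nat.pow_pos (by norm_num)
  have hb : 0 < (2:ℕ)^b := Nat.pow_pos (by norm_num)
  have hx : x < 2^(J+b) := h ▸ Nat.mod_lt _ (Nat.pow_pos (by norm_num))
  have h2 : a = 2^(J+b) * (a / 2^(J+b)) + x := by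
    conv_lhs => rw [← Nat.div_add_mod a (2^(J+b))]
    rw [h]
  have hsplit : (2:ℕ)^(J+b) = 2^J * 2^b := by rw [pow_add]
  have h3 : a / 2^J = 2^b * (a / 2^(J+b)) + x / 2^J := by
    have hre : a = x + (2^b * (a / 2^(J+b))) * 2^J := by
      calc a = 2^(J+b) * (a / 2^(J+b)) + x := h2
      _ = x + (2^b * (a / 2^(J+b))) * 2^J := by rw [hsplit]; ring
    conv_lhs => rw [hre, Nat.add_mul_div_right _ _ hJ]
    omega
  rw [h3, Nat.mul_add_mod]
  apply Nat.mod_eq_of_lt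
  rw [Nat.div_lt_iff_lt_mul hJ]
  calc x < 2^(J+b) := hx
  _ = 2^b * 2^J := by rw [pow_add]; ring

lemma infinite_of_unbounded {S : Set ℕ} (h : ∀ m, ∃ a ∈ S, m < a) : S.Infinite := by
  by_contra hfin
  rw [Set.not_infinite] at hfin
  obtain ⟨ub, hub⟩ := hfin.bddAbove
  obtain ⟨a, ha, hlt⟩ := h ub
  exact absurd (hub ha) (not_le.mpr hlt)

/-- The catching lemma. -/
lemma catch_lemma (A : Set ℕ) (hA : A.Infinite) (f : ℕ → ℕ)
    (hf : ∀ᶠ n in Filter.atTop, hfun A n ≤ f n) : (A ∩ Bf f).Infinite := by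
  obtain ⟨n₀, hn₀⟩ := Filter.eventually_atTop.mp hf
  apply infinite_of_unbounded
  intro m
  obtain ⟨i, hin₀, him⟩ : ∃ i, n₀ ≤ i ∧ m < i := ⟨max n₀ (m+1), le_max_left _ _, by omega⟩
  have hJge : i ≤ Jf i := Jf_ge i
  obtain ⟨u, hu⟩ : ∃ u, u = xres A (Jf i + (i+1)) / 2^(Jf i) := ⟨_, rfl⟩
  have hulr : u < 2^(i+1) := by
    rw [hu, Nat.div_lt_iff_lt_mul (Nat.pow_pos (by norm_num))]
    calc xres A (Jf i + (i+1)) < 2^(Jf i + (i+1)) := xres_lt A _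
    _ = 2^(i+1) * 2^(Jf i) := by rw [pow_add]; ring
  obtain ⟨k, hk⟩ : ∃ k, k = Jf i + (i+1) + u := ⟨_, rfl⟩
  have hik : i ≤ k := by omega
  have hkNk : k < Nf f k := Nf_gt f k
  have hn₀Nk : n₀ ≤ Nf f k := by omega
  obtain ⟨haA, hagt, hamod⟩ := hfun_spec A hA (Nf f k)
  have haf : hfun A (Nf f k) ≤ f (Nf f k) := hn₀ _ hn₀Nk
  have haN : hfun A (Nf f k) < Nf f (k+1) := by
    have h5 : f (Nf f k) < Nf f (k+1) := by
      have hp : 0 < 4^(k+1) := Nat.pow_pos (by norm_num)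
      show f (Nf f k) < f (Nf f k) + 2 * Nf f k + 4^(k+1) + 1
      omega
    omega
  have hm'Nk : Jf i + (i+1) ≤ Nf f k := by omega
  have hmod' : hfun A (Nf f k) % 2^(Jf i + (i+1)) = xres A (Jf i + (i+1)) := by
    have hdvd : (2:ℕ)^(Jf i + (i+1)) ∣ 2^(Nf f k) := pow_dvd_pow 2 hm'Nk
    calc hfun A (Nf f k) % 2^(Jf i + (i+1))
        = (hfun A (Nf f k) % 2^(Nf f k)) % 2^(Jf i + (i+1)) :=
          (Nat.mod_mod_of_dvd _ hdvd).symm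
    _ = xres A (Nf f k) % 2^(Jf i + (i+1)) := by rw [hamod]
    _ = xres A (Jf i + (i+1)) := xres_mod A hm'Nk
  have hbits : (hfun A (Nf f k) / 2^(Jf i)) % 2^(i+1) = u := by
    rw [hu]
    exact bits_extract _ _ _ _ hmod'
  refine ⟨hfun A (Nf f k), ⟨haA, ⟨k, le_of_lt hagt, haN, ⟨i, ?_, ?_, ?_⟩⟩⟩, ?_⟩
  · omega
  · have h6 : Jf (i+1) = Jf i + (i+1) + 2^(i+1) := rfl
    omega
  · rw [hbits]
    omega
  · omega

end


/-- `cov*(𝒵₀) ≤ 𝔡`: there is a family of density-zero sets of cardinality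
at most `𝔡` such that every infinite subset of `ω` meets some member in an infinite set. -/
theorem stmt_3 : ∃ F : Set (Set ℕ),
    (∀ A ∈ F, densityZero A) ∧
    #↥F ≤ dominatingNumber ∧
    ∀ A : Set ℕ, A.Infinite → ∃ B ∈ F, (A ∩ B).Infinite := by
  have hne : {c | ∃ F : Set (ℕ → ℕ), #↥F = c ∧
      ∀ g : ℕ → ℕ, ∃ f ∈ F, ∀ᶠ n in atTop, g n ≤ f n}.Nonempty := by
    refine ⟨#↥(Set.univ : Set (ℕ → ℕ)), Set.univ, rfl, ?_⟩
    intro g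
    exact ⟨g, Set.mem_univ g, Filter.Eventually.of_forall fun n => le_rfl⟩
  have hmem := csInf_mem hne
  obtain ⟨D, hDcard, hDdom⟩ := hmem
  refine ⟨(fun f => Bf f) '' D, ?_, ?_, ?_⟩
  · rintro B ⟨f, -, rfl⟩
    exact densityZero_Bf f
  · calc #↥((fun f => Bf f) '' D) ≤ #↥D := Cardinal.mk_image_le
    _ = dominatingNumber := hDcard
  · intro A hA
    obtain ⟨f, hfD, hfdom⟩ := hDdom (hfun A)
    exact ⟨Bf f, ⟨f, hfD, rfl⟩, catch_lemma A hA f hfdom⟩
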